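/- The maps +1∘ and (+1)⁻¹∘ of the extended adding machine (over alphabet {0,1,0̂,1̂}) generate the free inverse monoid on one generator: for every n ∈ ℕ, (+1)(+1)⁻¹((+1)⁻¹)ⁿ(+1)ⁿ ≠ ((+1)⁻¹)ⁿ(+1)ⁿ and (+1)⁻¹(+1)(+1)ⁿ((+1)⁻¹)ⁿ ≠ (+1)ⁿ((+1)⁻¹)ⁿ as partial maps on ({0,1,0̂,1̂})^ω. -/

import Mathlib

variable {Q A : Type*}

/-- The (partial) state reached after reading the first `n` letters of `ξ` from state `q`
in the deterministic partial automaton `δ`. -/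
def pstate (δ : Q → A → Option (A × Q)) (ξ : ℕ → A) (q : Q) : ℕ → Option Q
  | 0 => some q
  | n + 1 => (pstate δ ξ q n).bind fun s => (δ s (ξ n)).map Prod.snd

/-- The (partial) output letter at position `n` when reading `ξ` from state `q`. -/
def pout (δ : Q → A → Option (A × Q)) (ξ : ℕ → A) (q : Q) (n : ℕ) : Option A :=
  (pstate δ ξ q n).bind fun s => (δ s (ξ n)).map Prod.fst

open Classical in
/-- The partial action of a state `q` on an infinite word `ξ`. -/
noncomputable def pact (δ : Q → A → Option (A × Q)) (q : Q) (ξ : ℕ → A) : Option (ℕ → A) :=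
  if h : ∀ n, (pout δ ξ q n).isSome then some fun n => (pout δ ξ q n).get (h n) else none

/-- The partial action of a state sequence `q_n … q_1` (rightmost acting first). -/
noncomputable def pactW (δ : Q → A → Option (A × Q)) : List Q → (ℕ → A) → Option (ℕ → A)
  | [], ξ => some ξ
  | q :: w, ξ => (pactW δ w ξ).bind (pact δ q)

/-- The orbit `Q* ∘ ξ` of an infinite word. -/
def orbitP (δ : Q → A → Option (A × Q)) (ξ : ℕ → A) : Set (ℕ → A) :=
  {η | ∃ w : List Q, pactW δ w ξ = some η}

/-- The semigroup generated by the automaton: all partial maps on infinite words induced by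
nonempty state sequences. -/
def sgpP (δ : Q → A → Option (A × Q)) : Set ((ℕ → A) → Option (ℕ → A)) :=
  {F | ∃ w : List Q, w ≠ [] ∧ F = pactW δ w}

/-- The alphabet `{0, 1, 0̂, 1̂}`: `z = 0`, `o = 1`, `zh = 0̂`, `oh = 1̂`. -/
inductive Lam | z | o | zh | oh
deriving DecidableEq

/-- The two states `+1` and `+0` of the extended adding machine. -/
inductive ESt | one | zero
deriving DecidableEq

/-- The extended adding machine: `+1` on `1` outputs `0` staying in `+1`, on `0` outputs `1`
going to `+0`, on `0̂` outputs `1̂` going to `+0`, and is undefined on `1̂`; `+0` fixes every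
letter. -/
def deltaE : ESt → Lam → Option (Lam × ESt)
  | .one, .o => some (.z, .one)
  | .one, .z => some (.o, .zero)
  | .one, .zh => some (.oh, .zero)
  | .one, .oh => none
  | .zero, a => some (a, .zero)

/-- The inverse automaton of the extended adding machine. -/
def deltaEInv : ESt → Lam → Option (Lam × ESt)
  | .one, .z => some (.o, .one)
  | .one, .o => some (.z, .zero)
  | .one, .oh => some (.zh, .zero)
  | .one, .zh => none
  | .zero, a => some (a, .zero)

/-- The union of the extended adding machine and its inverse (`inl` = original states,
`inr` = inverse states), whose states act as mutually inverse partial maps on ω-words. -/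
def deltaETil : ESt ⊕ ESt → Lam → Option (Lam × (ESt ⊕ ESt))
  | .inl s, a => (deltaE s a).map fun x => (x.1, .inl x.2)
  | .inr s, a => (deltaEInv s a).map fun x => (x.1, .inr x.2)

/-- `+1` as a state of the combined automaton. -/
def plus : ESt ⊕ ESt := .inl .one

/-- `(+1)⁻¹` as a state of the combined automaton. -/
def minus : ESt ⊕ ESt := .inr .one

section Aux

variable {Q A : Type*}

/-- Prepend a letter to an infinite word. -/
def scons (a : A) (t : ℕ → A) : ℕ → A
  | 0 => a
  | n + 1 => t n

/-- Prepend a finite word to an infinite word. -/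
def wcat : List A → (ℕ → A) → ℕ → A
  | [], t => t
  | a :: l, t => scons a (wcat l t)

/-- Run a partial Mealy automaton on a finite word. -/
def runList (δ : Q → A → Option (A × Q)) : Q → List A → Option (List A × Q)
  | q, [] => some ([], q)
  | q, a :: l => (δ q a).bind fun x => (runList δ x.2 l).map fun y => (x.1 :: y.1, y.2)

lemma pstate_scons (δ : Q → A → Option (A × Q)) (a : A) (t : ℕ → A) (q : Q) (n : ℕ) :
    pstate δ (scons a t) q (n + 1) = (δ q a).bind fun x => pstate δ t x.2 n := by
  induction n with
  | zero =>
    show Option.map Prod.snd (δ q a) = (δ q a).bind fun x => pstate δ t x.2 0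
    cases δ q a <;> rfl
  | succ n ih =>
    show (pstate δ (scons a t) q (n + 1)).bind _ = _
    rw [ih]
    cases h : δ q a with
    | none => rfl
    | some x =>
      show (pstate δ t x.2 n).bind _ = _
      rfl

lemma pout_scons_zero (δ : Q → A → Option (A × Q)) (a : A) (t : ℕ → A) (q : Q) :
    pout δ (scons a t) q 0 = (δ q a).map Prod.fst := by
  show ((some q).bind fun s => (δ s a).map Prod.fst) = _
  rfl

lemma pout_scons_succ (δ : Q → A → Option (A × Q)) (a : A) (t : ℕ → A) (q : Q) (n : ℕ) :
    pout δ (scons a t) q (n + 1) = (δ q a).bind fun x => pout δ t x.2 n := by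
  unfold pout
  rw [pstate_scons]
  cases δ q a with
  | none => rfl
  | some x => rfl

lemma pact_none_of_pout (δ : Q → A → Option (A × Q)) (q : Q) (ξ : ℕ → A) (n : ℕ)
    (h : pout δ ξ q n = none) : pact δ q ξ = none := by
  rw [pact, dif_neg]
  intro hall
  have := hall n
  rw [h] at this
  simp at this

lemma pact_eq_some (δ : Q → A → Option (A × Q)) (q : Q) (ξ η : ℕ → A)
    (h : ∀ n, pout δ ξ q n = some (η n)) : pact δ q ξ = some η := by
  have hall : ∀ n, (pout δ ξ q n).isSome := fun n => by rw [h n]; rfl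
  rw [pact, dif_pos hall]
  congr 1
  funext n
  have := h n
  rw [Option.eq_some_iff_get_eq] at this
  exact this.2

lemma pout_of_pact_some (δ : Q → A → Option (A × Q)) (q : Q) (ξ η : ℕ → A)
    (h : pact δ q ξ = some η) : ∀ n, pout δ ξ q n = some (η n) := by
  rw [pact] at h
  split at h
  · rename_i hall
    intro n
    have : η n = (pout δ ξ q n).get (hall n) := by
      have := Option.some.inj h
      rw [← this]
    rw [this, Option.some_get]
  · exact absurd h (by simp)

lemma pact_scons (δ : Q → A → Option (A × Q)) (q : Q) (a : A) (t : ℕ → A) :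
    pact δ q (scons a t) = (δ q a).bind fun x => (pact δ x.2 t).map (scons x.1) := by
  cases h : δ q a with
  | none =>
    apply pact_none_of_pout δ q _ 0
    rw [pout_scons_zero, h]
    rfl
  | some x =>
    show _ = (pact δ x.2 t).map (scons x.1)
    cases h2 : pact δ x.2 t with
    | none =>
      rw [pact] at h2
      split at h2
      · exact absurd h2 (by simp)
      · rename_i hne
        push_neg at hne
        obtain ⟨n, hn⟩ := hne
        apply pact_none_of_pout δ q _ (n + 1)
        rw [pout_scons_succ, h]
        simp only [Option.bind_some]
        exact Option.not_isSome_iff_eq_none.mp hn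
    | some η =>
      have hp := pout_of_pact_some δ x.2 t η h2
      apply pact_eq_some
      intro n
      cases n with
      | zero => rw [pout_scons_zero, h]; rfl
      | succ n =>
        rw [pout_scons_succ, h]
        simp only [Option.bind_some]
        exact hp n

lemma pact_wcat (δ : Q → A → Option (A × Q)) (q : Q) (l : List A) (t : ℕ → A) :
    pact δ q (wcat l t) = (runList δ q l).bind fun y => (pact δ y.2 t).map (wcat y.1) := by
  induction l generalizing q with
  | nil =>
    show pact δ q t = (pact δ q t).map (wcat [])
    cases pact δ q t <;> rfl
  | cons a l ih =>
    show pact δ q (scons a (wcat l t)) = _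
    rw [pact_scons]
    simp only [runList]
    cases h : δ q a with
    | none => rfl
    | some x =>
      simp only [Option.bind_some]
      rw [ih]
      cases runList δ x.2 l with
      | none => rfl
      | some y =>
        show ((pact δ y.2 t).map (wcat y.1)).map (scons x.1)
            = (pact δ y.2 t).map (wcat (x.1 :: y.1))
        cases pact δ y.2 t <;> rfl

end Aux

lemma pactW_append {Q A : Type*} (δ : Q → A → Option (A × Q)) (l₁ l₂ : List Q) (ξ : ℕ → A) :
    pactW δ (l₁ ++ l₂) ξ = (pactW δ l₂ ξ).bind (pactW δ l₁) := by
  induction l₁ with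
  | nil =>
    rw [List.nil_append]
    cases pactW δ l₂ ξ <;> rfl
  | cons q l ih =>
    show (pactW δ (l ++ l₂) ξ).bind _ = _
    rw [ih]
    cases pactW δ l₂ ξ with
    | none => rfl
    | some η => rfl

lemma runList_zeroL (l : List Lam) :
    runList deltaETil (Sum.inl ESt.zero) l = some (l, Sum.inl ESt.zero) := by
  induction l with
  | nil => rfl
  | cons a l ih => simp [runList, deltaETil, deltaE, ih]

lemma pact_zeroL (t : ℕ → Lam) : pact deltaETil (Sum.inl ESt.zero) t = some t := by
  apply pact_eq_some
  have hst : ∀ n, pstate deltaETil t (Sum.inl ESt.zero) n = some (Sum.inl ESt.zero) := by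
    intro n
    induction n with
    | zero => rfl
    | succ n ih => rw [pstate, ih]; simp [deltaETil, deltaE]
  intro n
  rw [pout, hst]
  simp [deltaETil, deltaE]

lemma runList_plus_carry (j : ℕ) (l : List Lam) :
    runList deltaETil plus (List.replicate j .o ++ .z :: l)
      = some (List.replicate j .z ++ .o :: l, Sum.inl ESt.zero) := by
  induction j with
  | zero => simp [runList, deltaETil, deltaE, plus, runList_zeroL]
  | succ j ih =>
    simp [List.replicate_succ, runList, deltaETil, deltaE, plus]
    exact ih

lemma runList_minus_z (n : ℕ) :
    runList deltaETil minus (List.replicate n .z) = some (List.replicate n .o, minus) := by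
  induction n with
  | zero => rfl
  | succ n ih =>
    simp [List.replicate_succ, runList, deltaETil, deltaEInv, minus]
    exact ih

/-- The reversed `k`-bit binary expansion of `n`, followed by nothing; low-order bits first. -/
def bits : ℕ → ℕ → List Lam
  | 0, _ => []
  | k + 1, n => if n < 2 ^ k then bits k n ++ [.z] else bits k (n - 2 ^ k) ++ [.o]

lemma bits_zero (k : ℕ) : bits k 0 = List.replicate k .z := by
  induction k with
  | zero => rfl
  | succ k ih => rw [bits, if_pos (Nat.pow_pos (by norm_num)), ih,
      ← List.replicate_succ']

lemma bits_top (k : ℕ) : bits k (2 ^ k - 1) = List.replicate k .o := by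
  induction k with
  | zero => rfl
  | succ k ih =>
    have h2 : 2 ^ (k + 1) = 2 ^ k + 2 ^ k := by rw [pow_succ]; omega
    have h0 : 0 < 2 ^ k := Nat.pow_pos (by norm_num)
    rw [bits, if_neg (by omega), show 2 ^ (k + 1) - 1 - 2 ^ k = 2 ^ k - 1 by omega, ih,
      ← List.replicate_succ']

lemma wcat_append_single (l : List Lam) (a : Lam) (t : ℕ → Lam) :
    wcat (l ++ [a]) t = wcat l (scons a t) := by
  induction l with
  | nil => rfl
  | cons b l ih =>
    show scons b (wcat (l ++ [a]) t) = scons b (wcat l (scons a t))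
    rw [ih]

lemma pact_plus_step (k n : ℕ) (t : ℕ → Lam) (h : n + 1 < 2 ^ k) :
    pact deltaETil plus (wcat (bits k n) t) = some (wcat (bits k (n + 1)) t) := by
  induction k generalizing n t with
  | zero => simp at h
  | succ k ih =>
    have h2 : 2 ^ (k + 1) = 2 ^ k + 2 ^ k := by rw [pow_succ]; omega
    simp only [bits]
    rcases lt_trichotomy (n + 1) (2 ^ k) with hlt | heq | hgt
    · rw [if_pos (by omega : n < 2 ^ k), if_pos hlt, wcat_append_single, wcat_append_single]
      exact ih n (scons .z t) hlt
    · rw [if_pos (by omega : n < 2 ^ k), if_neg (by omega : ¬ n + 1 < 2 ^ k),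
        show n + 1 - 2 ^ k = 0 by omega, bits_zero,
        show n = 2 ^ k - 1 by omega, bits_top]
      rw [pact_wcat, runList_plus_carry k [], Option.bind_some, pact_zeroL]
      rfl
    · rw [if_neg (by omega : ¬ n < 2 ^ k), if_neg (by omega : ¬ n + 1 < 2 ^ k),
        show n + 1 - 2 ^ k = (n - 2 ^ k) + 1 by omega,
        wcat_append_single, wcat_append_single]
      exact ih (n - 2 ^ k) (scons .o t) (by omega)

lemma pact_plus_iter (k n : ℕ) (t : ℕ → Lam) (h : n < 2 ^ k) :
    pactW deltaETil (List.replicate n plus) (wcat (bits k 0) t)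
      = some (wcat (bits k n) t) := by
  induction n with
  | zero => rfl
  | succ n ih =>
    rw [List.replicate_succ]
    show (pactW deltaETil (List.replicate n plus) _).bind _ = _
    rw [ih (by omega), Option.bind_some]
    exact pact_plus_step k n t h

lemma deltaE_inv_step (s : ESt) (a b : Lam) (s' : ESt) (h : deltaE s a = some (b, s')) :
    deltaEInv s b = some (a, s') := by
  cases s <;> cases a <;> simp_all [deltaE, deltaEInv] <;> simp [← h.1, ← h.2, deltaEInv]

lemma pact_cancel (η ζ : ℕ → Lam) (h : pact deltaETil plus η = some ζ) :
    pact deltaETil minus ζ = some η := by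
  have hζ := pout_of_pact_some deltaETil plus η ζ h
  have inv : ∀ m, ∃ s : ESt, pstate deltaETil η plus m = some (.inl s) ∧
      pstate deltaETil ζ minus m = some (.inr s) := by
    intro m
    induction m with
    | zero => exact ⟨.one, rfl, rfl⟩
    | succ m ih =>
      obtain ⟨s, h1, h2⟩ := ih
      have hm := hζ m
      rw [pout, h1, Option.bind_some] at hm
      cases hd : deltaE s (η m) with
      | none => rw [show deltaETil (.inl s) (η m) = none by simp [deltaETil, hd]] at hm
                exact absurd hm (by simp)
      | some x =>
        have hb : ζ m = x.1 := by
          rw [show deltaETil (.inl s) (η m) = some (x.1, .inl x.2) by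
            simp [deltaETil, hd]] at hm
          simpa using hm.symm
        have hinv := deltaE_inv_step s (η m) x.1 x.2 (by rw [hd])
        refine ⟨x.2, ?_, ?_⟩
        · rw [pstate, h1, Option.bind_some, show deltaETil (.inl s) (η m)
            = some (x.1, .inl x.2) by simp [deltaETil, hd]]
          rfl
        · rw [pstate, h2, Option.bind_some, hb, show deltaETil (.inr s) x.1
            = some (η m, .inr x.2) by simp [deltaETil, hinv]]
          rfl
  apply pact_eq_some
  intro m
  obtain ⟨s, h1, h2⟩ := inv m
  have hm := hζ m
  rw [pout, h1, Option.bind_some] at hm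
  rw [pout, h2, Option.bind_some]
  cases hd : deltaE s (η m) with
  | none => rw [show deltaETil (.inl s) (η m) = none by simp [deltaETil, hd]] at hm
            exact absurd hm (by simp)
  | some x =>
    have hb : ζ m = x.1 := by
      rw [show deltaETil (.inl s) (η m) = some (x.1, .inl x.2) by simp [deltaETil, hd]] at hm
      simpa using hm.symm
    have hinv := deltaE_inv_step s (η m) x.1 x.2 (by rw [hd])
    rw [hb, show deltaETil (.inr s) x.1 = some (η m, .inr x.2) by simp [deltaETil, hinv]]
    rfl

lemma pactW_cancel (n : ℕ) (η ζ : ℕ → Lam)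
    (h : pactW deltaETil (List.replicate n plus) η = some ζ) :
    pactW deltaETil (List.replicate n minus) ζ = some η := by
  induction n generalizing η ζ with
  | zero => exact congrArg some (Option.some.inj h).symm
  | succ n ih =>
    rw [List.replicate_succ] at h
    have h' : (pactW deltaETil (List.replicate n plus) η).bind (pact deltaETil plus)
        = some ζ := h
    cases hmid : pactW deltaETil (List.replicate n plus) η with
    | none => rw [hmid] at h'; exact absurd h' (by simp)
    | some η₁ =>
      rw [hmid, Option.bind_some] at h'
      rw [List.replicate_succ', pactW_append]
      have hone : pactW deltaETil [minus] ζ = some η₁ := pact_cancel η₁ ζ h'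
      rw [hone, Option.bind_some]
      exact ih η η₁ hmid

/-- The letter involution `0 ↔ 1`, `0̂ ↔ 1̂`. -/
def swapL : Lam → Lam
  | .z => .o
  | .o => .z
  | .zh => .oh
  | .oh => .zh

lemma deltaETil_swap (q : ESt ⊕ ESt) (a : Lam) :
    deltaETil (q.swap) (swapL a) = (deltaETil q a).map (Prod.map swapL Sum.swap) := by
  rcases q with s | s <;> cases s <;> cases a <;> rfl

lemma pstate_swap (ξ : ℕ → Lam) (q : ESt ⊕ ESt) (m : ℕ) :
    pstate deltaETil (fun n => swapL (ξ n)) q.swap m = (pstate deltaETil ξ q m).map Sum.swap := by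
  induction m with
  | zero => rfl
  | succ m ih =>
    rw [pstate, pstate, ih]
    cases pstate deltaETil ξ q m with
    | none => rfl
    | some q' =>
      simp only [Option.map_some, Option.bind_some]
      rw [deltaETil_swap]
      cases deltaETil q' (ξ m) <;> rfl

lemma pout_swap (ξ : ℕ → Lam) (q : ESt ⊕ ESt) (m : ℕ) :
    pout deltaETil (fun n => swapL (ξ n)) q.swap m = (pout deltaETil ξ q m).map swapL := by
  rw [pout, pout, pstate_swap]
  cases pstate deltaETil ξ q m with
  | none => rfl
  | some q' =>
    simp only [Option.map_some, Option.bind_some]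
    rw [deltaETil_swap]
    cases deltaETil q' (ξ m) <;> rfl

lemma pact_swap (q : ESt ⊕ ESt) (ξ : ℕ → Lam) :
    pact deltaETil q.swap (fun n => swapL (ξ n))
      = (pact deltaETil q ξ).map (fun η n => swapL (η n)) := by
  cases h : pact deltaETil q ξ with
  | none =>
    have hnone : ¬ ∀ m, (pout deltaETil (fun n => swapL (ξ n)) q.swap m).isSome := by
      rw [pact] at h
      split at h
      · exact absurd h (by simp)
      · rename_i hne
        push_neg at hne
        obtain ⟨m, hm⟩ := hne
        intro hall
        have := hall m
        rw [pout_swap, Option.not_isSome_iff_eq_none.mp hm] at this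
        simp at this
    rw [pact, dif_neg hnone]
    rfl
  | some η =>
    have hp := pout_of_pact_some deltaETil q ξ η h
    apply pact_eq_some
    intro m
    rw [pout_swap, hp m]
    rfl

lemma pactW_swap (w : List (ESt ⊕ ESt)) (ξ : ℕ → Lam) :
    pactW deltaETil (w.map Sum.swap) (fun n => swapL (ξ n))
      = (pactW deltaETil w ξ).map (fun η n => swapL (η n)) := by
  induction w with
  | nil => rfl
  | cons q w ih =>
    show (pactW deltaETil (w.map Sum.swap) fun n => swapL (ξ n)).bind
        (pact deltaETil q.swap) = Option.map (fun η n => swapL (η n))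
        ((pactW deltaETil w ξ).bind (pact deltaETil q))
    rw [ih]
    cases pactW deltaETil w ξ with
    | none => rfl
    | some η =>
      simp only [Option.map_some, Option.bind_some]
      exact pact_swap q η

/-- The maps `+1 ∘` and `(+1)⁻¹ ∘` of the extended adding machine generate the free inverse
monoid on one generator: for all `n`,
`(+1)(+1)⁻¹((+1)⁻¹)ⁿ(+1)ⁿ ≠ ((+1)⁻¹)ⁿ(+1)ⁿ` and
`(+1)⁻¹(+1)(+1)ⁿ((+1)⁻¹)ⁿ ≠ (+1)ⁿ((+1)⁻¹)ⁿ` as partial maps on ω-words. -/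
theorem stmt18 :
    ∀ n : ℕ,
      pactW deltaETil ([plus, minus] ++ List.replicate n minus ++ List.replicate n plus) ≠
        pactW deltaETil (List.replicate n minus ++ List.replicate n plus) ∧
      pactW deltaETil ([minus, plus] ++ List.replicate n plus ++ List.replicate n minus) ≠
        pactW deltaETil (List.replicate n plus ++ List.replicate n minus) := by
  intro n
  set t : ℕ → Lam := fun _ => .zh with ht
  set ξ : ℕ → Lam := wcat (bits n 0) t with hξ
  have hplus : pactW deltaETil (List.replicate n plus) ξ = some (wcat (bits n n) t) :=
    pact_plus_iter n n t Nat.lt_two_pow_self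
  have hminusW : pactW deltaETil (List.replicate n minus) (wcat (bits n n) t) = some ξ :=
    pactW_cancel n ξ _ hplus
  have hRHS : pactW deltaETil (List.replicate n minus ++ List.replicate n plus) ξ = some ξ := by
    rw [pactW_append, hplus, Option.bind_some, hminusW]
  have hminus : pact deltaETil minus ξ = none := by
    rw [hξ, bits_zero, pact_wcat, runList_minus_z, Option.bind_some]
    have hnone : pact deltaETil minus t = none := by
      apply pact_none_of_pout deltaETil minus t 0
      rfl
    rw [hnone]
    rfl
  have hLHS : pactW deltaETil
      ([plus, minus] ++ List.replicate n minus ++ List.replicate n plus) ξ = none := by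
    rw [List.append_assoc, pactW_append, hRHS, Option.bind_some]
    show ((pactW deltaETil [] ξ).bind (pact deltaETil minus)).bind (pact deltaETil plus) = none
    rw [show pactW deltaETil [] ξ = some ξ from rfl, Option.bind_some, hminus]
    rfl
  constructor
  · intro heq
    have hc := congrFun heq ξ
    rw [hLHS, hRHS] at hc
    exact absurd hc (by simp)
  · intro heq
    have hmap1 : ([minus, plus] ++ List.replicate n plus ++ List.replicate n minus)
        = ([plus, minus] ++ List.replicate n minus ++ List.replicate n plus).map Sum.swap := by
      simp [plus, minus]
    have hmap2 : (List.replicate n plus ++ List.replicate n minus)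
        = (List.replicate n minus ++ List.replicate n plus).map Sum.swap := by
      simp [plus, minus]
    have hc := congrFun heq (fun m => swapL (ξ m))
    rw [hmap1, hmap2, pactW_swap, pactW_swap, hLHS, hRHS] at hc
    exact absurd hc (by simp)
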